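/- Cyclic derivatives satisfy the chain rule: if Q and Q' are finite quivers with the same vertex set Q_0, and φ : K⟪Q⟫ → K⟪Q'⟫ is a continuous algebra homomorphism restricting to the identity on S = K·Q_0, then for any potential W on Q and any arrow a of Q', ∂_a(φ(W)) = Σ_{b ∈ Q_1} Δ_a(φ(b)) • φ(∂_b W), where Δ_a(p) = Σ_{α_i = a} α_k⋯α_{i+1} ⊗ α_{i-1}⋯α_1 for a path p = α_k⋯α_1, and (u ⊗ v) • g = v g u. -/

import Mathlib

/-!
STATEMENT 3: the chain rule for cyclic derivatives.  We model path algebras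
inside monoid algebras of free monoids on the arrow sets (cf. the comments in
STATEMENT 2); `φ` is an algebra homomorphism (automatically restricting to the
identity on `S = K`), `W` is any element (in particular any finite potential),
and the operation `deltaBullet a p g` is the composite `Δ_a(p) • g`, where on
a word `p = α_k ⋯ α_1` one has `Δ_a(p) = Σ_{α_i = a} α_k⋯α_{i+1} ⊗ α_{i-1}⋯α_1`
and `(u ⊗ v) • g = v g u`.  The claim is
`∂_a (φ W) = Σ_{b ∈ Q₁} Δ_a(φ(b)) • φ(∂_b W)`.
-/

open MonoidAlgebra

section Aux
variable {K : Type*} [CommRing K] {E : Type*} [DecidableEq E]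
variable {A : Type*} [Ring A] [Algebra K A]

/-- Generic "delta-bullet" of a word `u` at the letter `b`, with word-valuation `ψ`. -/
noncomputable def genDB (ψ : List E → A) (b : E) (u : List E) (g : A) : A :=
  ((List.range u.length).map fun i =>
    if u[i]? = some b then ψ (u.drop (i + 1)) * g * ψ (u.take i) else 0).sum

lemma genDB_nil (ψ : List E → A) (b : E) (g : A) : genDB ψ b [] g = 0 := by simp [genDB]

lemma genDB_cons (ψ : List E → A) (hψ1 : ψ [] = 1)
    (hψ : ∀ e l, ψ (e :: l) = ψ [e] * ψ l) (b e : E) (u : List E) (g : A) :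
    genDB ψ b (e :: u) g =
      (if e = b then ψ u * g else 0) + genDB ψ b u (g * ψ [e]) := by
  unfold genDB
  rw [List.length_cons, List.range_succ_eq_map, List.map_cons, List.sum_cons, List.map_map]
  congr 1
  · simp only [List.getElem?_cons_zero, List.drop_succ_cons, List.drop_zero, List.take_zero,
      hψ1, mul_one, Option.some.injEq]
  · refine congrArg List.sum (List.map_congr_left fun i _ => ?_)
    simp only [Function.comp, List.getElem?_cons_succ, List.drop_succ_cons, List.take_succ_cons]
    split_ifs with h
    · rw [hψ e (List.take i u)]
      simp only [mul_assoc]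
    · rfl

private lemma list_sum_map_add {ι : Type*} {M : Type*} [AddCommMonoid M] (l : List ι)
    (f g : ι → M) : (l.map fun i => f i + g i).sum = (l.map f).sum + (l.map g).sum := by
  induction l with
  | nil => simp
  | cons x t ih => simp [ih, add_add_add_comm]

lemma genDB_add (ψ : List E → A) (b : E) (u : List E) (g h : A) :
    genDB ψ b u (g + h) = genDB ψ b u g + genDB ψ b u h := by
  unfold genDB
  rw [← list_sum_map_add]
  refine congrArg List.sum (List.map_congr_left fun i _ => ?_)
  split_ifs with hc
  · rw [mul_add, add_mul]
  · rw [add_zero]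

lemma genDB_smul (ψ : List E → A) (b : E) (u : List E) (c : K) (g : A) :
    genDB ψ b u (c • g) = c • genDB ψ b u g := by
  unfold genDB
  rw [List.smul_sum, List.map_map]
  refine congrArg List.sum (List.map_congr_left fun i _ => ?_)
  simp only [Function.comp]
  split_ifs with hc
  · rw [mul_smul_comm, smul_mul_assoc]
  · rw [smul_zero]

lemma genDB_zero (ψ : List E → A) (b : E) (u : List E) : genDB ψ b u 0 = 0 := by
  unfold genDB
  rw [← List.sum_map_zero (l := List.range u.length)]
  refine congrArg List.sum (List.map_congr_left fun i _ => ?_)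
  split_ifs <;> simp

lemma genDB_append (ψ : List E → A) (hψ1 : ψ [] = 1)
    (hψapp : ∀ l₁ l₂, ψ (l₁ ++ l₂) = ψ l₁ * ψ l₂) (b : E) (u v : List E) (g : A) :
    genDB ψ b (u ++ v) g = genDB ψ b u (ψ v * g) + genDB ψ b v (g * ψ u) := by
  have hψ : ∀ e l, ψ (e :: l) = ψ [e] * ψ l := fun e l => hψapp [e] l
  induction u generalizing g with
  | nil => rw [List.nil_append, genDB_nil, hψ1, mul_one, zero_add]
  | cons e t ih =>
      rw [List.cons_append, genDB_cons ψ hψ1 hψ, genDB_cons ψ hψ1 hψ, ih (g * ψ [e]),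
        hψapp t v, hψ e t]
      have h1 : (if e = b then ψ t * ψ v * g else 0) = (if e = b then ψ t * (ψ v * g) else 0) := by
        split_ifs <;> simp [mul_assoc]
      rw [h1, add_assoc]
      congr 2
      · rw [mul_assoc]
      · rw [mul_assoc]

lemma map_genDB {A' : Type*} [Ring A'] [Algebra K A'] (φ : A →ₐ[K] A')
    (ψ : List E → A) (b : E) (u : List E) (g : A) :
    φ (genDB ψ b u g) = genDB (fun l => φ (ψ l)) b u (φ g) := by
  unfold genDB
  rw [map_list_sum, List.map_map]
  refine congrArg List.sum (List.map_congr_left fun i _ => ?_)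
  simp only [Function.comp, apply_ite φ, map_mul, map_zero]

end Aux

/-- The cyclic derivative of a single word at the letter `a`. -/
noncomputable def cyclicDerivWord (K : Type*) [CommRing K] {E : Type*} [DecidableEq E]
    (a : E) (w : List E) : MonoidAlgebra K (FreeMonoid E) :=
  ((List.range w.length).map fun i =>
    if w[i]? = some a then
      MonoidAlgebra.single (FreeMonoid.ofList (w.drop (i + 1) ++ w.take i)) (1 : K)
    else 0).sum

/-- The cyclic derivative at `a`, extended linearly. -/
noncomputable def cyclicDeriv (K : Type*) [CommRing K] {E : Type*} [DecidableEq E]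
    (a : E) : MonoidAlgebra K (FreeMonoid E) →ₗ[K] MonoidAlgebra K (FreeMonoid E) :=
  Finsupp.lift (MonoidAlgebra K (FreeMonoid E)) K (FreeMonoid E)
    (fun w => cyclicDerivWord K a (FreeMonoid.toList w)) ∘ₗ
    (MonoidAlgebra.coeffLinearEquiv K).toLinearMap

/-- `Δ_a(w) • g` for a single word `w`: for each occurrence of `a` in `w`, we
obtain the term `(right part of w) * g * (left part of w)`. -/
noncomputable def deltaBulletWord (K : Type*) [CommRing K] {E : Type*} [DecidableEq E]
    (a : E) (w : List E) (g : MonoidAlgebra K (FreeMonoid E)) :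
    MonoidAlgebra K (FreeMonoid E) :=
  ((List.range w.length).map fun i =>
    if w[i]? = some a then
      MonoidAlgebra.single (FreeMonoid.ofList (w.drop (i + 1))) (1 : K) * g *
        MonoidAlgebra.single (FreeMonoid.ofList (w.take i)) (1 : K)
    else 0).sum

/-- `Δ_a(p) • g`, extended linearly in `p`. -/
noncomputable def deltaBullet (K : Type*) [CommRing K] {E : Type*} [DecidableEq E]
    (a : E) (p g : MonoidAlgebra K (FreeMonoid E)) : MonoidAlgebra K (FreeMonoid E) :=
  p.coeff.sum fun w c => c • deltaBulletWord K a (FreeMonoid.toList w) g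


section Bridge
variable {K : Type*} [CommRing K] {E : Type*} [DecidableEq E]

/-- The standard word-valuation in the monoid algebra. -/
noncomputable def psi0 (K : Type*) [CommRing K] (E : Type*) : List E → MonoidAlgebra K (FreeMonoid E) :=
  fun l => MonoidAlgebra.single (FreeMonoid.ofList l) (1 : K)

lemma psi0_nil : psi0 K E [] = 1 := rfl

lemma psi0_append (l₁ l₂ : List E) : psi0 K E (l₁ ++ l₂) = psi0 K E l₁ * psi0 K E l₂ := by
  simp [psi0, MonoidAlgebra.single_mul_single]

lemma deltaBulletWord_eq (a : E) (u : List E) (g : MonoidAlgebra K (FreeMonoid E)) :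
    deltaBulletWord K a u g = genDB (psi0 K E) a u g := rfl

lemma cyclicDerivWord_eq (a : E) (u : List E) :
    cyclicDerivWord K a u = genDB (psi0 K E) a u 1 := by
  unfold cyclicDerivWord genDB
  refine congrArg List.sum (List.map_congr_left fun i _ => ?_)
  split_ifs with h
  · rw [show psi0 K E (u.drop (i+1)) * 1 * psi0 K E (u.take i)
        = psi0 K E (u.drop (i+1) ++ u.take i) by rw [mul_one, ← psi0_append]]
    rfl
  · rfl

lemma deltaBullet_def (a : E) (p g : MonoidAlgebra K (FreeMonoid E)) :
    deltaBullet K a p g = p.coeff.sum fun w c => c • genDB (psi0 K E) a (FreeMonoid.toList w) g := rfl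

lemma deltaBullet_single (a : E) (w : FreeMonoid E) (c : K) (g : MonoidAlgebra K (FreeMonoid E)) :
    deltaBullet K a (MonoidAlgebra.single w c) g
      = c • genDB (psi0 K E) a (FreeMonoid.toList w) g := by
  rw [deltaBullet_def]
  exact Finsupp.sum_single_index (by rw [zero_smul])

lemma deltaBullet_add_left (a : E) (p q g : MonoidAlgebra K (FreeMonoid E)) :
    deltaBullet K a (p + q) g = deltaBullet K a p g + deltaBullet K a q g := by
  rw [deltaBullet_def, deltaBullet_def, deltaBullet_def, MonoidAlgebra.coeff_add]
  exact Finsupp.sum_add_index' (fun w => zero_smul K _) (fun w c d => add_smul c d _)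

lemma deltaBullet_smul_left (a : E) (c : K) (p g : MonoidAlgebra K (FreeMonoid E)) :
    deltaBullet K a (c • p) g = c • deltaBullet K a p g := by
  rw [deltaBullet_def, deltaBullet_def, MonoidAlgebra.coeff_smul, Finsupp.sum_smul_index', Finsupp.smul_sum]
  · exact Finsupp.sum_congr fun w _ => by rw [smul_assoc]
  · exact fun w => zero_smul K _

lemma deltaBullet_add_right (a : E) (p g h : MonoidAlgebra K (FreeMonoid E)) :
    deltaBullet K a p (g + h) = deltaBullet K a p g + deltaBullet K a p h := by
  rw [deltaBullet_def, deltaBullet_def, deltaBullet_def, ← Finsupp.sum_add]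
  exact Finsupp.sum_congr fun w _ => by rw [genDB_add, smul_add]

lemma deltaBullet_smul_right (a : E) (c : K) (p g : MonoidAlgebra K (FreeMonoid E)) :
    deltaBullet K a p (c • g) = c • deltaBullet K a p g := by
  rw [deltaBullet_def, deltaBullet_def, Finsupp.smul_sum]
  exact Finsupp.sum_congr fun w _ => by rw [genDB_smul, smul_comm]

lemma deltaBullet_zero_left (a : E) (g : MonoidAlgebra K (FreeMonoid E)) :
    deltaBullet K a 0 g = 0 := by
  rw [deltaBullet_def, MonoidAlgebra.coeff_zero]; exact Finsupp.sum_zero_index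

lemma deltaBullet_zero_right (a : E) (p : MonoidAlgebra K (FreeMonoid E)) :
    deltaBullet K a p 0 = 0 := by
  simp only [deltaBullet_def, Finsupp.sum]
  exact Finset.sum_eq_zero fun w _ => by rw [genDB_zero, smul_zero]

/-- The product rule for `deltaBullet`. -/
lemma deltaBullet_mul (a : E) (p q g : MonoidAlgebra K (FreeMonoid E)) :
    deltaBullet K a (p * q) g = deltaBullet K a p (q * g) + deltaBullet K a q (g * p) := by
  induction p using MonoidAlgebra.induction_linear with
  | zero => simp [deltaBullet_zero_left, deltaBullet_zero_right]
  | add p₁ p₂ h₁ h₂ =>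
      rw [add_mul, deltaBullet_add_left, h₁, h₂, deltaBullet_add_left, mul_add,
        deltaBullet_add_right]
      abel
  | single w c =>
      induction q using MonoidAlgebra.induction_linear with
      | zero => simp [deltaBullet_zero_left, deltaBullet_zero_right]
      | add q₁ q₂ h₁ h₂ =>
          rw [mul_add, deltaBullet_add_left, h₁, h₂, deltaBullet_add_left, add_mul,
            deltaBullet_add_right]
          abel
      | single v d =>
          rw [MonoidAlgebra.single_mul_single, deltaBullet_single, deltaBullet_single,
            deltaBullet_single]
          have htl : FreeMonoid.toList (w * v) = FreeMonoid.toList w ++ FreeMonoid.toList v := rfl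
          rw [htl, genDB_append (psi0 K E) psi0_nil psi0_append]
          have hv : MonoidAlgebra.single v d = d • psi0 K E (FreeMonoid.toList v) := by
            unfold psi0
            rw [FreeMonoid.ofList_toList, MonoidAlgebra.smul_single, smul_eq_mul, mul_one]
          have hw : MonoidAlgebra.single w c = c • psi0 K E (FreeMonoid.toList w) := by
            unfold psi0
            rw [FreeMonoid.ofList_toList, MonoidAlgebra.smul_single, smul_eq_mul, mul_one]
          simp only [hv, hw, smul_mul_assoc, mul_smul_comm, genDB_smul, smul_smul]
          rw [smul_add, mul_comm d c]

end Bridge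

section Main
variable {K : Type*} [CommRing K] {E E' : Type*} [DecidableEq E] [DecidableEq E']

lemma cyclicDeriv_eq_deltaBullet (a : E) (x : MonoidAlgebra K (FreeMonoid E)) :
    cyclicDeriv K a x = deltaBullet K a x 1 := by
  have h : cyclicDeriv K a x = x.coeff.sum fun w c => c • cyclicDerivWord K a (FreeMonoid.toList w) :=
    rfl
  rw [h, deltaBullet_def]
  exact Finsupp.sum_congr fun w _ => by rw [cyclicDerivWord_eq]

variable [Fintype E] (φ : MonoidAlgebra K (FreeMonoid E) →ₐ[K] MonoidAlgebra K (FreeMonoid E'))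

lemma psiphi_nil : φ (psi0 K E []) = 1 := by rw [psi0_nil, map_one]

lemma psiphi_cons (e : E) (l : List E) :
    φ (psi0 K E (e :: l)) = φ (psi0 K E [e]) * φ (psi0 K E l) := by
  rw [show (e :: l) = [e] ++ l from rfl, psi0_append, map_mul]

lemma chain_key (a : E') (w : List E) :
    ∀ g : MonoidAlgebra K (FreeMonoid E'),
    deltaBullet K a (φ (psi0 K E w)) g
      = ∑ b : E, deltaBullet K a (φ (MonoidAlgebra.single (FreeMonoid.of b) 1))
          (genDB (fun l => φ (psi0 K E l)) b w g) := by
  induction w with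
  | nil =>
      intro g
      rw [psi0_nil, map_one, MonoidAlgebra.one_def, deltaBullet_single]
      have h0 : FreeMonoid.toList (1 : FreeMonoid E') = [] := rfl
      rw [h0, genDB_nil, smul_zero]
      refine (Finset.sum_eq_zero fun b _ => ?_).symm
      rw [genDB_nil, deltaBullet_zero_right]
  | cons e t ih =>
      intro g
      rw [psiphi_cons φ e t, deltaBullet_mul, ih (g * φ (psi0 K E [e]))]
      have hrhs : ∀ b : E, genDB (fun l => φ (psi0 K E l)) b (e :: t) g
          = (if e = b then φ (psi0 K E t) * g else 0)
            + genDB (fun l => φ (psi0 K E l)) b t (g * φ (psi0 K E [e])) :=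
        fun b => genDB_cons _ (psiphi_nil φ) (psiphi_cons φ) b e t g
      have hsum : ∑ b : E, deltaBullet K a (φ (MonoidAlgebra.single (FreeMonoid.of b) 1))
            (genDB (fun l => φ (psi0 K E l)) b (e :: t) g)
          = (∑ b : E, deltaBullet K a (φ (MonoidAlgebra.single (FreeMonoid.of b) 1))
              (if e = b then φ (psi0 K E t) * g else 0))
            + ∑ b : E, deltaBullet K a (φ (MonoidAlgebra.single (FreeMonoid.of b) 1))
              (genDB (fun l => φ (psi0 K E l)) b t (g * φ (psi0 K E [e]))) := by
        rw [← Finset.sum_add_distrib]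
        exact Finset.sum_congr rfl fun b _ => by rw [hrhs b, deltaBullet_add_right]
      rw [hsum]
      congr 1
      have hite : ∀ b : E, deltaBullet K a (φ (MonoidAlgebra.single (FreeMonoid.of b) 1))
            (if e = b then φ (psi0 K E t) * g else 0)
          = if e = b then deltaBullet K a (φ (MonoidAlgebra.single (FreeMonoid.of b) 1))
              (φ (psi0 K E t) * g) else 0 := by
        intro b
        split_ifs with h
        · rfl
        · rw [deltaBullet_zero_right]
      rw [Finset.sum_congr rfl fun b _ => hite b, Finset.sum_ite_eq Finset.univ e
        (fun b => deltaBullet K a (φ (MonoidAlgebra.single (FreeMonoid.of b) 1))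
          (φ (psi0 K E t) * g)), if_pos (Finset.mem_univ e)]
      rfl

lemma chain_key2 (a : E') (W : MonoidAlgebra K (FreeMonoid E))
    (g : MonoidAlgebra K (FreeMonoid E')) :
    deltaBullet K a (φ W) g
      = ∑ b : E, deltaBullet K a (φ (MonoidAlgebra.single (FreeMonoid.of b) 1))
          (W.coeff.sum fun w c => c • genDB (fun l => φ (psi0 K E l)) b (FreeMonoid.toList w) g) := by
  induction W using MonoidAlgebra.induction_linear with
  | zero =>
      rw [map_zero, deltaBullet_zero_left]
      refine (Finset.sum_eq_zero fun b _ => ?_).symm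
      rw [MonoidAlgebra.coeff_zero, Finsupp.sum_zero_index, deltaBullet_zero_right]
  | add p q hp hq =>
      rw [map_add, deltaBullet_add_left, hp, hq, ← Finset.sum_add_distrib]
      refine Finset.sum_congr rfl fun b _ => ?_
      rw [MonoidAlgebra.coeff_add, Finsupp.sum_add_index' (fun w => by rw [zero_smul]) (fun w c d => by rw [add_smul]),
        deltaBullet_add_right]
  | single w c =>
      have hsw : (MonoidAlgebra.single w c : MonoidAlgebra K (FreeMonoid E))
          = c • psi0 K E (FreeMonoid.toList w) := by
        unfold psi0
        rw [FreeMonoid.ofList_toList, MonoidAlgebra.smul_single, smul_eq_mul, mul_one]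
      have h1 : ∀ b : E, ((MonoidAlgebra.single w c).coeff.sum fun w' c' =>
            c' • genDB (fun l => φ (psi0 K E l)) b (FreeMonoid.toList w') g)
          = c • genDB (fun l => φ (psi0 K E l)) b (FreeMonoid.toList w) g :=
        fun b => Finsupp.sum_single_index (by rw [zero_smul])
      simp only [h1]
      simp only [hsw, map_smul, deltaBullet_smul_left]
      rw [chain_key φ a (FreeMonoid.toList w) g, Finset.smul_sum]
      exact Finset.sum_congr rfl fun b _ => (deltaBullet_smul_right _ _ _ _).symm

end Main

/-- The chain rule for cyclic derivatives. -/
theorem cyclicDeriv_chain_rule (K : Type*) [CommRing K]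
    {E E' : Type*} [DecidableEq E] [DecidableEq E'] [Fintype E]
    (φ : MonoidAlgebra K (FreeMonoid E) →ₐ[K] MonoidAlgebra K (FreeMonoid E'))
    (W : MonoidAlgebra K (FreeMonoid E)) (a : E') :
    cyclicDeriv K a (φ W) =
      ∑ b : E, deltaBullet K a (φ (MonoidAlgebra.single (FreeMonoid.of b) 1))
        (φ (cyclicDeriv K b W)) := by
  rw [cyclicDeriv_eq_deltaBullet, chain_key2 φ a W 1]
  refine Finset.sum_congr rfl fun b _ => ?_
  congr 1
  rw [cyclicDeriv_eq_deltaBullet, deltaBullet_def, map_finsuppSum]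
  refine Finsupp.sum_congr fun w _ => ?_
  rw [map_smul, map_genDB φ, map_one]
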